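/- Let β : ℝ → ℝ be a domain-wall function: β is odd, increasing, continuously differentiable with bounded derivative, β(x) → β(∞) ∈ (0, ∞) as x → +∞, β(x) → −β(∞) as x → −∞, and ∫₀^∞ |β(y) − β(∞)| dy < ∞, ∫_{−∞}^0 |β(y) + β(∞)| dy < ∞. For h > 0 let β_h : ℤ → ℝ be the discretization β_h(n) = (1/h)∫_{nh}^{(n+1)h} β(x) dx and let p_h β_h be its piecewise linear interpolation, (p_h β_h)(x) = β_h(n) + h⁻¹(β_h(n+1) − β_h(n))·(x − nh) for x ∈ [nh, (n+1)h). Then p_h β_h − β ∈ L²(ℝ) for every h > 0 and ‖p_h β_h − β‖_{L²(ℝ)} → 0 as h → 0⁺. -/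

import Mathlib

open MeasureTheory Filter Topology Set intervalIntegral

open scoped ENNReal NNReal
private lemma dw_avg_bounds {β : ℝ → ℝ} (hc : Continuous β) (hm : Monotone β)
    {a h : ℝ} (hh : 0 < h) :
    β a ≤ (1/h) * ∫ x in a..(a+h), β x ∧ (1/h) * (∫ x in a..(a+h), β x) ≤ β (a+h) := by
  have hab : a ≤ a + h := by linarith
  have hint : IntervalIntegrable β volume a (a+h) := hc.intervalIntegrable _ _
  have h1 : (∫ _x in a..(a+h), β a) ≤ ∫ x in a..(a+h), β x :=
    intervalIntegral.integral_mono_on hab intervalIntegrable_const hint (fun x hx => hm hx.1)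
  have h2 : (∫ x in a..(a+h), β x) ≤ ∫ _x in a..(a+h), β (a+h) :=
    intervalIntegral.integral_mono_on hab hint intervalIntegrable_const (fun x hx => hm hx.2)
  rw [intervalIntegral.integral_const, smul_eq_mul] at h1 h2
  rw [one_div, inv_mul_eq_div, le_div_iff₀ hh, div_le_iff₀ hh]
  constructor <;> nlinarith [h1, h2]

theorem domain_wall_interpolation_converges (β : ℝ → ℝ) (βinf : ℝ) (hβinf : 0 < βinf)
    (hodd : ∀ x : ℝ, β (-x) = -β x) (hmono : StrictMono β) (hC1 : ContDiff ℝ 1 β)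
    (hbd : ∃ Cd : ℝ, ∀ x : ℝ, |deriv β x| ≤ Cd)
    (htop : Tendsto β atTop (𝓝 βinf)) (hbot : Tendsto β atBot (𝓝 (-βinf)))
    (hint_top : IntegrableOn (fun y : ℝ => |β y - βinf|) (Ici 0) volume)
    (hint_bot : IntegrableOn (fun y : ℝ => |β y + βinf|) (Iic 0) volume)
    (βd : ℝ → ℤ → ℝ)
    (hβd : ∀ h : ℝ, 0 < h → ∀ n : ℤ,
      βd h n = (1 / h) * ∫ x in ((n : ℝ) * h)..(((n : ℝ) + 1) * h), β x)
    (ph : ℝ → ℝ → ℝ)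
    (hph : ∀ h : ℝ, 0 < h → ∀ x : ℝ,
      ph h x = βd h ⌊x / h⌋ +
        h⁻¹ * (βd h (⌊x / h⌋ + 1) - βd h ⌊x / h⌋) * (x - (⌊x / h⌋ : ℝ) * h)) :
    (∀ h : ℝ, 0 < h → MemLp (fun x => ph h x - β x) 2 (volume : Measure ℝ)) ∧
    Tendsto (fun h : ℝ => eLpNorm (fun x => ph h x - β x) 2 (volume : Measure ℝ))
      (𝓝[>] (0 : ℝ)) (𝓝 0) := by
  obtain ⟨Cd, hCd⟩ := hbd
  have hCd0 : 0 ≤ Cd := le_trans (abs_nonneg _) (hCd 0)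
  have hmonot : Monotone β := hmono.monotone
  have hcont : Continuous β := hC1.continuous
  have hdiff : Differentiable ℝ β := hC1.differentiable (by norm_num)
  have hlip : ∀ a b : ℝ, |β a - β b| ≤ Cd * |a - b| := by
    have hl : LipschitzWith (Real.toNNReal Cd) β := by
      refine lipschitzWith_of_nnnorm_deriv_le hdiff fun x => ?_
      rw [← NNReal.coe_le_coe, coe_nnnorm, Real.norm_eq_abs, Real.coe_toNNReal _ hCd0]
      exact hCd x
    intro a b
    have := hl.dist_le_mul a b
    rwa [Real.dist_eq, Real.dist_eq, Real.coe_toNNReal _ hCd0] at this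
  have hβle : ∀ x : ℝ, β x ≤ βinf := fun x =>
    ge_of_tendsto htop (eventually_atTop.2 ⟨x, fun y hy => hmonot hy⟩)
  have hβge : ∀ x : ℝ, -βinf ≤ β x := fun x =>
    le_of_tendsto hbot (eventually_atBot.2 ⟨x, fun y hy => hmonot hy⟩)
  -- the dominating function
  set g : ℝ → ℝ → ℝ := fun c x => min (βinf - β (x - c)) (βinf + β (x + c)) with hg_def
  have hgnn : ∀ c x, 0 ≤ g c x := fun c x =>
    le_min (by linarith [hβle (x - c)]) (by linarith [hβge (x + c)])
  have hgcont : ∀ c, Continuous (g c) := fun c =>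
    Continuous.min (continuous_const.sub (hcont.comp (continuous_id.sub continuous_const)))
      (continuous_const.add (hcont.comp (continuous_id.add continuous_const)))
  have hgmono : ∀ {c c' : ℝ}, c ≤ c' → ∀ x, g c x ≤ g c' x := by
    intro c c' hcc x
    exact min_le_min (by linarith [hmonot (show x - c' ≤ x - c by linarith)])
      (by linarith [hmonot (show x + c ≤ x + c' by linarith)])
  -- integrability of g c
  have hgint : ∀ c : ℝ, 0 < c → Integrable (g c) volume := by
    intro c hc
    have habs_top : (fun y : ℝ => |β y - βinf|) = fun y => βinf - β y := by
      funext y; rw [abs_of_nonpos (by linarith [hβle y])]; ring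
    have habs_bot : (fun y : ℝ => |β y + βinf|) = fun y => βinf + β y := by
      funext y; rw [abs_of_nonneg (by linarith [hβge y])]; ring
    -- integrability of βinf - β on Ici (-c)
    have hu0 : IntegrableOn (fun y : ℝ => βinf - β y) (Ici (-c)) volume := by
      have h1 : IntegrableOn (fun y : ℝ => βinf - β y) (Ici 0) volume := by
        rw [← habs_top]; exact hint_top
      have h2 : IntegrableOn (fun y : ℝ => βinf - β y) (Icc (-c) 0) volume :=
        (continuous_const.sub hcont).integrableOn_Icc
      refine (h2.union h1).mono_set fun y hy => ?_
      rcases le_total y 0 with h | h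
      · exact Or.inl ⟨hy, h⟩
      · exact Or.inr h
    have hv0 : IntegrableOn (fun y : ℝ => βinf + β y) (Iic c) volume := by
      have h1 : IntegrableOn (fun y : ℝ => βinf + β y) (Iic 0) volume := by
        rw [← habs_bot]; exact hint_bot
      have h2 : IntegrableOn (fun y : ℝ => βinf + β y) (Icc 0 c) volume :=
        (continuous_const.add hcont).integrableOn_Icc
      refine (h1.union h2).mono_set fun y hy => ?_
      rcases le_total y 0 with h | h
      · exact Or.inl h
      · exact Or.inr ⟨h, hy⟩
    -- translate: u := fun x => βinf - β (x - c) is integrable on Ici 0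
    have hu : IntegrableOn (fun x : ℝ => βinf - β (x - c)) (Ici 0) volume := by
      have h1 : Integrable ((Ici (-c)).indicator fun y : ℝ => βinf - β y) volume :=
        (integrable_indicator_iff measurableSet_Ici).2 hu0
      have h2 : Integrable (fun x : ℝ => (Ici (-c)).indicator (fun y : ℝ => βinf - β y) (x - c))
          volume := h1.comp_sub_right c
      have h3 : (fun x : ℝ => (Ici (-c)).indicator (fun y : ℝ => βinf - β y) (x - c)) =
          (Ici (0:ℝ)).indicator fun x : ℝ => βinf - β (x - c) := by
        funext x
        rw [Set.indicator_apply, Set.indicator_apply]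
        refine if_congr ?_ rfl rfl
        rw [mem_Ici, mem_Ici]
        constructor <;> intro <;> linarith
      rw [h3] at h2
      exact (integrable_indicator_iff measurableSet_Ici).1 h2
    have hv : IntegrableOn (fun x : ℝ => βinf + β (x + c)) (Iic 0) volume := by
      have h1 : Integrable ((Iic c).indicator fun y : ℝ => βinf + β y) volume :=
        (integrable_indicator_iff measurableSet_Iic).2 hv0
      have h2 : Integrable (fun x : ℝ => (Iic c).indicator (fun y : ℝ => βinf + β y) (x + c))
          volume := h1.comp_add_right c
      have h3 : (fun x : ℝ => (Iic c).indicator (fun y : ℝ => βinf + β y) (x + c)) =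
          (Iic (0:ℝ)).indicator fun x : ℝ => βinf + β (x + c) := by
        funext x
        rw [Set.indicator_apply, Set.indicator_apply]
        refine if_congr ?_ rfl rfl
        rw [mem_Iic, mem_Iic]
        constructor <;> intro <;> linarith
      rw [h3] at h2
      exact (integrable_indicator_iff measurableSet_Iic).1 h2
    -- g c dominated on each half line
    have hgIci : IntegrableOn (g c) (Ici 0) volume := by
      refine hu.mono' ((hgcont c).aestronglyMeasurable.restrict) ?_
      filter_upwards with x
      rw [Real.norm_eq_abs, abs_of_nonneg (hgnn c x)]
      exact min_le_left _ _
    have hgIic : IntegrableOn (g c) (Iic 0) volume := by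
      refine hv.mono' ((hgcont c).aestronglyMeasurable.restrict) ?_
      filter_upwards with x
      rw [Real.norm_eq_abs, abs_of_nonneg (hgnn c x)]
      exact min_le_right _ _
    have : IntegrableOn (g c) (Iic 0 ∪ Ici 0) volume := hgIic.union hgIci
    rwa [Iic_union_Ici, integrableOn_univ] at this
  -- key pointwise bound
  have key : ∀ h : ℝ, 0 < h → ∀ x : ℝ,
      |ph h x - β x| ≤ min (2 * Cd * h) (g (2 * h) x) := by
    intro h hh x
    set n : ℤ := ⌊x / h⌋ with hn_def
    set A : ℝ := (n : ℝ) * h with hA_def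
    have hn1 : A ≤ x := by
      rw [hA_def, ← le_div_iff₀ hh]; exact Int.floor_le _
    have hn2 : x < A + h := by
      have := Int.lt_floor_add_one (x / h)
      rw [hA_def]
      calc x = (x / h) * h := by field_simp
        _ < ((n:ℝ) + 1) * h := by
            exact mul_lt_mul_of_pos_right this hh
        _ = (n:ℝ) * h + h := by ring
    have e1 : βd h n = (1/h) * ∫ y in A..(A + h), β y := by
      rw [hβd h hh n, hA_def, show ((n:ℝ) + 1) * h = (n:ℝ) * h + h by ring]
    have e2 : βd h (n + 1) = (1/h) * ∫ y in (A + h)..(A + h + h), β y := by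
      rw [hβd h hh (n + 1), hA_def]
      push_cast
      rw [show ((n:ℝ) + 1) * h = (n:ℝ) * h + h by ring,
        show ((n:ℝ) + 1 + 1) * h = (n:ℝ) * h + h + h by ring]
    have b1 := dw_avg_bounds hcont hmonot (a := A) hh
    have b2 := dw_avg_bounds hcont hmonot (a := A + h) hh
    rw [← e1] at b1
    rw [← e2] at b2
    -- ph h x lies between βd h n and βd h (n+1)
    have hdle : βd h n ≤ βd h (n + 1) := le_trans b1.2 b2.1
    have ht0 : 0 ≤ h⁻¹ * (x - A) := mul_nonneg (le_of_lt (inv_pos.2 hh)) (by linarith)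
    have ht1 : h⁻¹ * (x - A) ≤ 1 := by
      rw [inv_mul_eq_div, div_le_one hh]; linarith
    have hph_eq : ph h x = βd h n + h⁻¹ * (βd h (n + 1) - βd h n) * (x - A) := by
      rw [hph h hh x]
    have hph_lb : βd h n ≤ ph h x := by
      rw [hph_eq]; nlinarith [hdle, ht0]
    have hph_ub : ph h x ≤ βd h (n + 1) := by
      rw [hph_eq]; nlinarith [hdle, ht0, ht1]
    -- β x also lies in [β A, β (A + 2h)]
    have hβx1 : β A ≤ β x := hmonot hn1
    have hβx2 : β x ≤ β (A + h + h) := hmonot (by linarith)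
    have hlb : β A ≤ ph h x := le_trans b1.1 hph_lb
    have hub : ph h x ≤ β (A + h + h) := le_trans hph_ub b2.2
    have hosc : |ph h x - β x| ≤ β (A + h + h) - β A :=
      abs_le.2 ⟨by linarith, by linarith⟩
    refine le_trans hosc (le_min ?_ (le_min ?_ ?_))
    · have := hlip (A + h + h) A
      rw [show A + h + h - A = 2 * h by ring, abs_of_pos (by linarith : (0:ℝ) < 2 * h),
        abs_of_nonneg (by linarith [hmonot (show A ≤ A + h + h by linarith)] : (0:ℝ) ≤ β (A+h+h) - β A)] at this
      linarith
    · have h1 : β (x - 2 * h) ≤ β A := hmonot (by linarith)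
      have h2 : β (A + h + h) ≤ βinf := hβle _
      linarith
    · have h1 : β (A + h + h) ≤ β (x + 2 * h) := hmonot (by linarith)
      have h2 : -βinf ≤ β A := hβge _
      linarith
  -- measurability
  have hmeas : ∀ h : ℝ, 0 < h →
      AEStronglyMeasurable (fun x => ph h x - β x) (volume : Measure ℝ) := by
    intro h hh
    have hfl : Measurable fun x : ℝ => (⌊x / h⌋ : ℤ) :=
      Int.measurable_floor.comp (measurable_id.div_const h)
    have hphm : Measurable (fun x => ph h x) := by
      have : (fun x => ph h x) = fun x => βd h ⌊x / h⌋ +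
          h⁻¹ * (βd h (⌊x / h⌋ + 1) - βd h ⌊x / h⌋) * (x - (⌊x / h⌋ : ℝ) * h) :=
        funext fun x => hph h hh x
      rw [this]
      have m1 : Measurable fun x : ℝ => βd h ⌊x / h⌋ :=
        (measurable_of_countable fun n : ℤ => βd h n).comp hfl
      have m2 : Measurable fun x : ℝ => βd h (⌊x / h⌋ + 1) :=
        (measurable_of_countable fun n : ℤ => βd h (n + 1)).comp hfl
      have m3 : Measurable fun x : ℝ => ((⌊x / h⌋ : ℤ) : ℝ) :=
        (measurable_of_countable fun n : ℤ => (n : ℝ)).comp hfl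
      exact m1.add ((measurable_const.mul (m2.sub m1)).mul
        (measurable_id.sub (m3.mul_const h)))
    exact (hphm.sub hcont.measurable).aestronglyMeasurable
  -- eLpNorm bound
  have hbound : ∀ h : ℝ, 0 < h →
      eLpNorm (fun x => ph h x - β x) 2 (volume : Measure ℝ) ≤
        ENNReal.ofReal ((2 * Cd * h * ∫ x, g (2 * h) x) ^ (1/2 : ℝ)) := by
    intro h hh
    set f : ℝ → ℝ := fun x => ph h x - β x with hf_def
    have hIg : Integrable (g (2 * h)) volume := hgint (2 * h) (by linarith)
    have hM0 : 0 ≤ 2 * Cd * h * ∫ x, g (2 * h) x :=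
      mul_nonneg (by positivity) (integral_nonneg (hgnn (2 * h)))
    have hlint : (∫⁻ x, (‖f x‖₊ : ℝ≥0∞) ^ (2:ℝ)) ≤
        ENNReal.ofReal (2 * Cd * h * ∫ x, g (2 * h) x) := by
      have hpt : ∀ x, (‖f x‖₊ : ℝ≥0∞) ^ (2:ℝ) ≤
          ENNReal.ofReal ((2 * Cd * h) * g (2 * h) x) := by
        intro x
        have h1 : ((‖f x‖₊ : ℝ≥0∞)) = ENNReal.ofReal |f x| := by
          rw [← Real.norm_eq_abs, ofReal_norm, enorm_eq_nnnorm]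
        rw [h1, ENNReal.ofReal_rpow_of_nonneg (abs_nonneg _) (by norm_num)]
        refine ENNReal.ofReal_le_ofReal ?_
        have hk := key h hh x
        have hk1 : |f x| ≤ 2 * Cd * h := le_trans hk (min_le_left _ _)
        have hk2 : |f x| ≤ g (2 * h) x := le_trans hk (min_le_right _ _)
        have : |f x| ^ (2:ℝ) = |f x| * |f x| := by
          rw [show (2:ℝ) = ((2:ℕ):ℝ) by norm_num, Real.rpow_natCast]; ring
        rw [this]
        nlinarith [abs_nonneg (f x)]
      calc (∫⁻ x, (‖f x‖₊ : ℝ≥0∞) ^ (2:ℝ)) ≤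
            ∫⁻ x, ENNReal.ofReal ((2 * Cd * h) * g (2 * h) x) := lintegral_mono hpt
        _ = ENNReal.ofReal (∫ x, (2 * Cd * h) * g (2 * h) x) := by
            rw [← ofReal_integral_eq_lintegral_ofReal (hIg.const_mul _)
              (Filter.Eventually.of_forall fun x => mul_nonneg (by positivity) (hgnn _ _))]
        _ = ENNReal.ofReal (2 * Cd * h * ∫ x, g (2 * h) x) := by
            rw [MeasureTheory.integral_const_mul]
    rw [eLpNorm_eq_lintegral_rpow_enorm_toReal (by norm_num) (by norm_num)]
    simp only [ENNReal.toReal_ofNat]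
    calc (∫⁻ x, (‖f x‖₊ : ℝ≥0∞) ^ (2:ℝ)) ^ (1/(2:ℝ)) ≤
          (ENNReal.ofReal (2 * Cd * h * ∫ x, g (2 * h) x)) ^ (1/(2:ℝ)) :=
        ENNReal.rpow_le_rpow hlint (by norm_num)
      _ = ENNReal.ofReal ((2 * Cd * h * ∫ x, g (2 * h) x) ^ (1/2 : ℝ)) :=
        ENNReal.ofReal_rpow_of_nonneg hM0 (by norm_num)
  constructor
  · intro h hh
    exact ⟨hmeas h hh, lt_of_le_of_lt (hbound h hh) ENNReal.ofReal_lt_top⟩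
  · set I : ℝ := ∫ x, g 2 x with hI_def
    have hI0 : 0 ≤ I := integral_nonneg (hgnn 2)
    have hI2 : Integrable (g 2) volume := hgint 2 (by norm_num)
    have hFlim : Tendsto (fun h : ℝ => ENNReal.ofReal ((2 * Cd * I * h) ^ (1/2 : ℝ)))
        (𝓝[>] (0:ℝ)) (𝓝 0) := by
      have t1 : Tendsto (fun h : ℝ => 2 * Cd * I * h) (𝓝[>] (0:ℝ)) (𝓝 0) := by
        have h0 : Tendsto (fun y : ℝ => y) (𝓝 (0:ℝ)) (𝓝 0) := tendsto_id
        have h1 := h0.const_mul (2 * Cd * I)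
        simp only [mul_zero] at h1
        exact h1.mono_left nhdsWithin_le_nhds
      have t2 : Tendsto (fun y : ℝ => ENNReal.ofReal (y ^ (1/2 : ℝ))) (𝓝 0)
          (𝓝 0) := by
        have hc : ContinuousAt (fun y : ℝ => y ^ (1/2 : ℝ)) 0 :=
          Real.continuousAt_rpow_const 0 (1/2) (Or.inr (by norm_num))
        have h1 : Tendsto (fun y : ℝ => y ^ (1/2:ℝ)) (𝓝 0) (𝓝 ((0:ℝ) ^ (1/2:ℝ))) := hc.tendsto
        rw [Real.zero_rpow (by norm_num : (1/2:ℝ) ≠ 0)] at h1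
        have h2 := ENNReal.tendsto_ofReal (a := 0) h1
        simpa using h2
      exact t2.comp t1
    refine tendsto_of_tendsto_of_tendsto_of_le_of_le' tendsto_const_nhds hFlim
      (Filter.Eventually.of_forall fun _ => zero_le) ?_
    filter_upwards [Ioc_mem_nhdsGT_of_mem (by constructor <;> norm_num : (0:ℝ) ∈ Ico (0:ℝ) 1)]
      with h hh
    have hh0 : 0 < h := hh.1
    refine le_trans (hbound h hh0) (ENNReal.ofReal_le_ofReal ?_)
    have hIle : (∫ x, g (2 * h) x) ≤ I :=
      integral_mono (hgint (2*h) (by linarith)) hI2 (fun x => hgmono (by linarith [hh.2]) x)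
    refine Real.rpow_le_rpow (mul_nonneg (by positivity)
      (integral_nonneg (hgnn (2*h)))) ?_ (by norm_num)
    have h2 : 2 * Cd * h * (∫ x, g (2 * h) x) ≤ 2 * Cd * h * I :=
      mul_le_mul_of_nonneg_left hIle (by positivity)
    have heq : 2 * Cd * I * h = 2 * Cd * h * I := by ring
    linarith
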